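/- In the risk-neutral limit with a market maker having full access (H₀ = ℝ^K), the limit equilibrium satisfies X^∞_0 = X^∞_{-0} = Σ_{i≥1} X^∞_i, and consequently each X^∞_i for i ≥ 1 solves (X^∞_i)^{-H_i} = B_i^{-H_i} + π_i (2 X^∞_{-0} − X^∞_i)⁻¹ π_i. -/

import Mathlib

open Matrix BigOperators Filter Topology

/-- Orthogonal projection onto the coordinate subspace determined by `S`. -/
noncomputable def proj (K : Type*) [Fintype K] [DecidableEq K] (S : Finset K) :
    Matrix K K ℝ :=
  Matrix.diagonal (fun k => if k ∈ S then (1 : ℝ) else 0)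

/-- `B ∈ S_≻^{H}` : symmetric nonnegative definite, vanishing on vectors orthogonal
to the coordinate subspace `H` given by `S`, and strictly positive definite on `H`. -/
def SPDOn {K : Type*} [Fintype K] [DecidableEq K] (S : Finset K) (B : Matrix K K ℝ) : Prop :=
  B.PosSemidef ∧
  (∀ x : K → ℝ, (∀ j, j ∉ S → x j = 0) → x ≠ 0 → 0 < x ⬝ᵥ (B *ᵥ x)) ∧
  (∀ x : K → ℝ, (∀ j, j ∈ S → x j = 0) → B *ᵥ x = 0)

/-- The inverse of `B` computed on the coordinate subspace given by `S`, extended by zero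
(`B^{-H}` in the paper). -/
noncomputable def invOn {K : Type*} [Fintype K] [DecidableEq K] (S : Finset K)
    (B : Matrix K K ℝ) : Matrix K K ℝ :=
  proj K S * (B + proj K Sᶜ)⁻¹ * proj K S

/-- `A ≺_{H} B` : the difference `B - A` belongs to `S_≻^{H}`. -/
def ltOn {K : Type*} [Fintype K] [DecidableEq K] (S : Finset K) (A B : Matrix K K ℝ) : Prop :=
  SPDOn S (B - A)

/-- The best-response map `F_i(X) = (B_i^{-H_i} + π_i (X_{-i})⁻¹ π_i)^{-H_i}`. -/
noncomputable def Fmap {I K : Type*} [Fintype I] [DecidableEq I] [Fintype K] [DecidableEq K]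
    (Ki : I → Finset K) (B : I → Matrix K K ℝ) (X : I → Matrix K K ℝ) (i : I) :
    Matrix K K ℝ :=
  invOn (Ki i) (invOn (Ki i) (B i) +
    proj K (Ki i) * (∑ j ∈ Finset.univ.erase i, X j)⁻¹ * proj K (Ki i))

section helpers
set_option linter.unusedSectionVars false
variable {K : Type*} [Fintype K] [DecidableEq K]

lemma proj_transpose (S : Finset K) : (proj K S)ᵀ = proj K S :=
  Matrix.diagonal_transpose _

lemma proj_conjTranspose (S : Finset K) : (proj K S)ᴴ = proj K S := by
  rw [Matrix.conjTranspose]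
  simp [proj_transpose, proj]

lemma proj_mul_proj (S : Finset K) : proj K S * proj K S = proj K S := by
  rw [proj, Matrix.diagonal_mul_diagonal]
  have : (fun k => (if k ∈ S then (1:ℝ) else 0) * (if k ∈ S then (1:ℝ) else 0)) =
      (fun k => if k ∈ S then (1:ℝ) else 0) := by
    funext k; by_cases h : k ∈ S <;> simp [h]
  rw [this]

lemma proj_mul_compl (S : Finset K) : proj K S * proj K Sᶜ = 0 := by
  rw [proj, proj, Matrix.diagonal_mul_diagonal]
  have : (fun k => (if k ∈ S then (1:ℝ) else 0) * (if k ∈ Sᶜ then (1:ℝ) else 0)) =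
      (fun _ => (0:ℝ)) := by
    funext k; by_cases h : k ∈ S <;> simp [h]
  rw [this]
  simp

lemma compl_mul_proj (S : Finset K) : proj K Sᶜ * proj K S = 0 := by
  rw [proj, proj, Matrix.diagonal_mul_diagonal]
  have : (fun k => (if k ∈ Sᶜ then (1:ℝ) else 0) * (if k ∈ S then (1:ℝ) else 0)) =
      (fun _ => (0:ℝ)) := by
    funext k; by_cases h : k ∈ S <;> simp [h]
  rw [this]
  simp

lemma proj_add_compl (S : Finset K) : proj K S + proj K Sᶜ = 1 := by
  rw [proj, proj, Matrix.diagonal_add]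
  have : (fun k => (if k ∈ S then (1:ℝ) else 0) + (if k ∈ Sᶜ then (1:ℝ) else 0)) =
      (fun _ => (1:ℝ)) := by
    funext k; by_cases h : k ∈ S <;> simp [h]
  rw [this, Matrix.diagonal_one]

lemma proj_univ : proj K Finset.univ = 1 := by
  simp [proj, Matrix.diagonal_one]

lemma proj_compl_univ : proj K (Finset.univ : Finset K)ᶜ = 0 := by
  simp [proj]

lemma proj_hermitian (S : Finset K) : (proj K S).IsHermitian := proj_conjTranspose S

lemma dot_proj_shift (S : Finset K) (x v : K → ℝ) :
    x ⬝ᵥ (proj K S *ᵥ v) = (proj K S *ᵥ x) ⬝ᵥ v := by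
  rw [Matrix.dotProduct_mulVec, ← Matrix.mulVec_transpose, proj_transpose]

lemma sum_mulVec' {I : Type*} (s : Finset I) (X : I → Matrix K K ℝ) (x : K → ℝ) :
    (∑ j ∈ s, X j) *ᵥ x = ∑ j ∈ s, X j *ᵥ x := by
  classical
  induction s using Finset.induction_on with
  | empty => simp [Matrix.mulVec]
  | insert _ _ h ih => simp [Finset.sum_insert h, Matrix.add_mulVec, ih]

lemma dotProduct_sum' {I : Type*} (s : Finset I) (x : K → ℝ) (v : I → K → ℝ) :
    x ⬝ᵥ (∑ j ∈ s, v j) = ∑ j ∈ s, x ⬝ᵥ v j := by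
  classical
  induction s using Finset.induction_on with
  | empty => simp
  | insert _ _ h ih => simp [Finset.sum_insert h, dotProduct_add, ih]

lemma dotProduct_self_pos {v : K → ℝ} (hv : v ≠ 0) : 0 < v ⬝ᵥ v := by
  have h1 : 0 ≤ v ⬝ᵥ v := Finset.sum_nonneg fun i _ => mul_self_nonneg (v i)
  rcases h1.lt_or_eq with h | h
  · exact h
  · exact absurd (dotProduct_self_eq_zero.mp h.symm) hv

lemma dot_proj_self_nonneg (S : Finset K) (x : K → ℝ) :
    0 ≤ x ⬝ᵥ (proj K S *ᵥ x) := by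
  have hQ : x ⬝ᵥ (proj K S *ᵥ x) = (proj K S *ᵥ x) ⬝ᵥ (proj K S *ᵥ x) := by
    nth_rewrite 1 [← proj_mul_proj S]
    rw [← Matrix.mulVec_mulVec, dot_proj_shift]
  rw [hQ]
  exact Finset.sum_nonneg fun i _ => mul_self_nonneg _

lemma dot_proj_self_pos (S : Finset K) {x : K → ℝ} (hx : proj K S *ᵥ x ≠ 0) :
    0 < x ⬝ᵥ (proj K S *ᵥ x) := by
  have hQ : x ⬝ᵥ (proj K S *ᵥ x) = (proj K S *ᵥ x) ⬝ᵥ (proj K S *ᵥ x) := by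
    nth_rewrite 1 [← proj_mul_proj S]
    rw [← Matrix.mulVec_mulVec, dot_proj_shift]
  rw [hQ]
  exact dotProduct_self_pos hx

lemma spdOn_quad_nonneg {S : Finset K} {B : Matrix K K ℝ} (h : SPDOn S B) (x : K → ℝ) :
    0 ≤ x ⬝ᵥ (B *ᵥ x) := by
  have := h.1.dotProduct_mulVec_nonneg x
  rwa [star_trivial] at this

lemma spdOn_quad_pos {S : Finset K} {B : Matrix K K ℝ} (h : SPDOn S B) {x : K → ℝ} {k : K}
    (hk : k ∈ S) (hx : x k ≠ 0) : 0 < x ⬝ᵥ (B *ᵥ x) := by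
  set y : K → ℝ := fun k' => if k' ∈ S then x k' else 0 with hy
  set z : K → ℝ := x - y with hzdef
  have hxz : x = y + z := by funext k'; simp [hzdef]
  have hz : ∀ j, j ∈ S → z j = 0 := by intro j hj; simp [hzdef, hy, hj]
  have hBz : B *ᵥ z = 0 := h.2.2 z hz
  have hsym : Bᵀ = B := by simpa using h.1.1.eq
  have hBx : B *ᵥ x = B *ᵥ y := by rw [hxz, Matrix.mulVec_add, hBz, add_zero]
  have hzy : z ⬝ᵥ (B *ᵥ y) = 0 := by
    rw [Matrix.dotProduct_mulVec, ← Matrix.mulVec_transpose, hsym, hBz, zero_dotProduct]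
  have key : x ⬝ᵥ (B *ᵥ x) = y ⬝ᵥ (B *ᵥ y) := by
    rw [hBx]
    nth_rewrite 1 [hxz]
    rw [add_dotProduct, hzy, add_zero]
  rw [key]
  refine h.2.1 y (fun j hj => if_neg hj) ?_
  intro h0
  have hyk : (if k ∈ S then x k else 0) = 0 := congrFun h0 k
  rw [if_pos hk] at hyk
  exact hx hyk

lemma compl_supp {S : Finset K} {x : K → ℝ} (hQx : proj K Sᶜ *ᵥ x = 0) :
    ∀ j, j ∉ S → x j = 0 := by
  intro j hj
  have := congrFun hQx j
  simpa [proj, Matrix.mulVec_diagonal, hj] using this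

lemma spdOn_add_compl_posDef {S : Finset K} {B : Matrix K K ℝ} (h : SPDOn S B) :
    (B + proj K Sᶜ).PosDef := by
  refine Matrix.PosDef.of_dotProduct_mulVec_pos ?_ ?_
  · exact h.1.1.add (proj_hermitian _)
  · intro x hx
    rw [star_trivial, Matrix.add_mulVec, dotProduct_add]
    by_cases hQx : proj K Sᶜ *ᵥ x = 0
    · have h1 : 0 < x ⬝ᵥ (B *ᵥ x) := h.2.1 x (compl_supp hQx) hx
      have h2 : 0 ≤ x ⬝ᵥ (proj K Sᶜ *ᵥ x) := dot_proj_self_nonneg _ _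
      linarith
    · have h1 : 0 < x ⬝ᵥ (proj K Sᶜ *ᵥ x) := dot_proj_self_pos _ hQx
      have h2 : 0 ≤ x ⬝ᵥ (B *ᵥ x) := spdOn_quad_nonneg h x
      linarith

lemma sum_posDef {I : Type*} [DecidableEq I] (J : Finset I) (Ki : I → Finset K)
    (X : I → Matrix K K ℝ) (hX : ∀ j ∈ J, SPDOn (Ki j) (X j))
    (hcov : ∀ k : K, ∃ j ∈ J, k ∈ Ki j) : (∑ j ∈ J, X j).PosDef := by
  refine Matrix.PosDef.of_dotProduct_mulVec_pos ?_ ?_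
  · have : (∑ j ∈ J, X j)ᴴ = ∑ j ∈ J, (X j)ᴴ := Matrix.conjTranspose_sum _ _
    rw [Matrix.IsHermitian, this]
    exact Finset.sum_congr rfl fun j hj => (hX j hj).1.1
  · intro x hx
    rw [star_trivial, sum_mulVec', dotProduct_sum']
    obtain ⟨k, hk⟩ := Function.ne_iff.mp hx
    obtain ⟨j, hjJ, hjk⟩ := hcov k
    refine Finset.sum_pos' (fun i hi => spdOn_quad_nonneg (hX i hi) x) ⟨j, hjJ, ?_⟩
    exact spdOn_quad_pos (hX j hjJ) hjk hk

lemma proj_inv_proj_add_posDef {S : Finset K} {T : Matrix K K ℝ} (hT : T.PosDef) :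
    (proj K S * T⁻¹ * proj K S + proj K Sᶜ).PosDef := by
  have hTinv : T⁻¹.PosDef := hT.inv
  refine Matrix.PosDef.of_dotProduct_mulVec_pos ?_ ?_
  · refine Matrix.IsHermitian.add ?_ (proj_hermitian _)
    rw [Matrix.IsHermitian, Matrix.conjTranspose_mul, Matrix.conjTranspose_mul,
      proj_conjTranspose, hTinv.1.eq, Matrix.mul_assoc]
  · intro x hx
    rw [star_trivial, Matrix.add_mulVec, dotProduct_add]
    have key : x ⬝ᵥ ((proj K S * T⁻¹ * proj K S) *ᵥ x) =
        (proj K S *ᵥ x) ⬝ᵥ (T⁻¹ *ᵥ (proj K S *ᵥ x)) := by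
      rw [← Matrix.mulVec_mulVec, ← Matrix.mulVec_mulVec, dot_proj_shift]
    by_cases hPx : proj K S *ᵥ x = 0
    · have hxQ : proj K Sᶜ *ᵥ x = x := by
        have h1 : (proj K S + proj K Sᶜ) *ᵥ x = x := by rw [proj_add_compl]; simp
        rw [Matrix.add_mulVec, hPx, zero_add] at h1
        exact h1
      have h1 : 0 < x ⬝ᵥ (proj K Sᶜ *ᵥ x) := by
        rw [hxQ]; exact dotProduct_self_pos hx
      have h2 : 0 ≤ x ⬝ᵥ ((proj K S * T⁻¹ * proj K S) *ᵥ x) := by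
        rw [key]
        have := fun h => hTinv.dotProduct_mulVec_pos (x := proj K S *ᵥ x) h
        rw [star_trivial] at this
        rcases eq_or_ne (proj K S *ᵥ x) 0 with h | h
        · simp [h]
        · exact (this h).le
      linarith
    · have h1 : 0 < x ⬝ᵥ ((proj K S * T⁻¹ * proj K S) *ᵥ x) := by
        rw [key]
        have := hTinv.dotProduct_mulVec_pos hPx
        rwa [star_trivial] at this
      have h2 : 0 ≤ x ⬝ᵥ (proj K Sᶜ *ᵥ x) := dot_proj_self_nonneg _ _
      linarith

lemma invOn_invOn (S : Finset K) (C : Matrix K K ℝ)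
    (h1 : proj K S * C = C) (h2 : C * proj K S = C)
    (hPD : (C + proj K Sᶜ).PosDef) :
    invOn S (invOn S C) = C := by
  set P := proj K S with hP
  set Q := proj K Sᶜ with hQdef
  set E := C + Q with hE
  have hdet : IsUnit E.det := isUnit_iff_ne_zero.mpr hPD.det_pos.ne'
  have hPE : P * E = C := by rw [hE, mul_add, h1, hP, hQdef, proj_mul_compl, add_zero]
  have hEP : E * P = C := by rw [hE, add_mul, h2, hP, hQdef, compl_mul_proj, add_zero]
  have hQE : Q * E = Q := by
    rw [hE, mul_add]
    have : Q * C = 0 := by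
      rw [← h1, ← mul_assoc, hQdef, hP, compl_mul_proj, zero_mul]
    rw [this, zero_add, hQdef, proj_mul_proj]
  have key : (P * E⁻¹ * P + Q) * E = 1 := by
    rw [add_mul, hQE, mul_assoc, hPE, ← hEP, ← mul_assoc, mul_assoc P E⁻¹ E,
      Matrix.nonsing_inv_mul E hdet, mul_one, hP, proj_mul_proj, ← hP, ← proj_add_compl S]
  have hinv : (P * E⁻¹ * P + Q)⁻¹ = E := Matrix.inv_eq_right_inv key
  show P * (P * E⁻¹ * P + Q)⁻¹ * P = C
  have hPQ : P * Q = 0 := proj_mul_compl S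
  rw [hinv, hE, mul_add, add_mul, hPQ, zero_mul, add_zero, h1, h2]

lemma invOn_posSemidef {S : Finset K} {B : Matrix K K ℝ} (h : SPDOn S B) :
    (invOn S B).PosSemidef := by
  have hPD : (B + proj K Sᶜ).PosDef := spdOn_add_compl_posDef h
  have := hPD.inv.posSemidef.mul_mul_conjTranspose_same (proj K S)
  rwa [proj_conjTranspose] at this

lemma proj_mul_invOn (S : Finset K) (M : Matrix K K ℝ) :
    proj K S * invOn S M = invOn S M := by
  rw [invOn, ← mul_assoc, ← mul_assoc, proj_mul_proj]

lemma invOn_mul_proj (S : Finset K) (M : Matrix K K ℝ) :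
    invOn S M * proj K S = invOn S M := by
  rw [invOn, mul_assoc, proj_mul_proj]

end helpers

theorem stmt_14' {K : Type*} [Fintype K] [DecidableEq K] (m : ℕ) (hm : 2 ≤ m)
    (Ki : Fin (m + 1) → Finset K) (hK0 : Ki 0 = Finset.univ)
    (hacc : ∀ k : K, 3 ≤ (Finset.univ.filter (fun i : Fin (m + 1) => k ∈ Ki i)).card)
    (B : Fin (m + 1) → Matrix K K ℝ) (hB : ∀ i, i ≠ 0 → SPDOn (Ki i) (B i))
    (Xinf : Fin (m + 1) → Matrix K K ℝ)
    (hXspd : ∀ i, SPDOn (Ki i) (Xinf i))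
    (hfix : ∀ i, i ≠ 0 → Xinf i = invOn (Ki i) (invOn (Ki i) (B i) +
      proj K (Ki i) * (∑ j ∈ Finset.univ.erase i, Xinf j)⁻¹ * proj K (Ki i)))
    (hfix0 : Xinf 0 = invOn (Ki 0)
      (proj K (Ki 0) * (∑ j ∈ Finset.univ.erase 0, Xinf j)⁻¹ * proj K (Ki 0))) :
    Xinf 0 = ∑ j ∈ Finset.univ.erase 0, Xinf j ∧
    ∀ i, i ≠ 0 →
      invOn (Ki i) (Xinf i) = invOn (Ki i) (B i) +
        proj K (Ki i) *
          ((2 : ℝ) • (∑ j ∈ Finset.univ.erase 0, Xinf j) - Xinf i)⁻¹ *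
          proj K (Ki i) := by
  classical
  set S0 : Matrix K K ℝ := ∑ j ∈ Finset.univ.erase 0, Xinf j with hS0def
  have hcov : ∀ (i : Fin (m+1)) (k : K), ∃ j ∈ Finset.univ.erase i, k ∈ Ki j := by
    intro i k
    have h3 := hacc k
    set F := Finset.univ.filter (fun j : Fin (m+1) => k ∈ Ki j) with hF
    have hle : F.card - 1 ≤ (F.erase i).card := Finset.pred_card_le_card_erase
    have hne : (F.erase i).Nonempty := Finset.card_pos.mp (by omega)
    obtain ⟨j, hj⟩ := hne
    rw [Finset.mem_erase] at hj
    refine ⟨j, Finset.mem_erase.mpr ⟨hj.1, Finset.mem_univ j⟩, ?_⟩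
    have := hj.2
    rw [hF, Finset.mem_filter] at this
    exact this.2
  have hS0pd : S0.PosDef := sum_posDef _ Ki Xinf (fun j _ => hXspd j) (hcov 0)
  have part1 : Xinf 0 = S0 := by
    rw [hfix0, hK0, invOn, proj_univ, proj_compl_univ]
    simp only [one_mul, mul_one, add_zero]
    exact Matrix.nonsing_inv_nonsing_inv S0 (isUnit_iff_ne_zero.mpr hS0pd.det_pos.ne')
  refine ⟨part1, ?_⟩
  intro i hi
  have h0mem : (0 : Fin (m+1)) ∈ Finset.univ.erase i :=
    Finset.mem_erase.mpr ⟨Ne.symm hi, Finset.mem_univ _⟩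
  have himem : i ∈ Finset.univ.erase (0 : Fin (m+1)) :=
    Finset.mem_erase.mpr ⟨hi, Finset.mem_univ _⟩
  have hsplit : S0 = Xinf i + ∑ j ∈ (Finset.univ.erase (0:Fin (m+1))).erase i, Xinf j :=
    (Finset.add_sum_erase _ _ himem).symm
  have hR : (∑ j ∈ (Finset.univ.erase (0:Fin (m+1))).erase i, Xinf j) = S0 - Xinf i :=
    eq_sub_of_add_eq' hsplit.symm
  have hTsum : (∑ j ∈ Finset.univ.erase i, Xinf j) = (2:ℝ) • S0 - Xinf i := by
    rw [← Finset.add_sum_erase _ _ h0mem, part1, Finset.erase_right_comm, hR, two_smul ℝ]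
    abel
  rw [← hTsum]
  set T : Matrix K K ℝ := ∑ j ∈ Finset.univ.erase i, Xinf j with hTdef
  have hT : T.PosDef := sum_posDef _ Ki Xinf (fun j _ => hXspd j) (hcov i)
  set P := proj K (Ki i) with hPd
  set C : Matrix K K ℝ := invOn (Ki i) (B i) + P * T⁻¹ * P with hCdef
  have hXi : Xinf i = invOn (Ki i) C := hfix i hi
  rw [hXi]
  refine invOn_invOn (Ki i) C ?_ ?_ ?_
  · rw [hCdef, mul_add, hPd, proj_mul_invOn, ← hPd, ← mul_assoc, ← mul_assoc, hPd,
      proj_mul_proj]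
  · rw [hCdef, add_mul, hPd, invOn_mul_proj, ← hPd, mul_assoc, hPd, proj_mul_proj]
  · have hA1 : (invOn (Ki i) (B i)).PosSemidef := invOn_posSemidef (hB i hi)
    have hA2 : (P * T⁻¹ * P + proj K (Ki i)ᶜ).PosDef := proj_inv_proj_add_posDef hT
    have heq : C + proj K (Ki i)ᶜ = (P * T⁻¹ * P + proj K (Ki i)ᶜ) + invOn (Ki i) (B i) := by
      rw [hCdef]; abel
    rw [heq]
    exact hA2.add_posSemidef hA1


/-- Risk-neutral limit with a full-access market maker (`H₀ = ℝ^K`): the limit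
equilibrium satisfies `X^∞_0 = X^∞_{-0} = ∑_{i ≥ 1} X^∞_i`, and consequently each
`X^∞_i`, `i ≥ 1`, solves
`(X^∞_i)^{-H_i} = B_i^{-H_i} + π_i (2 X^∞_{-0} − X^∞_i)⁻¹ π_i`. -/
theorem stmt_14 {K : Type*} [Fintype K] [DecidableEq K] (m : ℕ) (hm : 2 ≤ m)
    (Ki : Fin (m + 1) → Finset K) (hK0 : Ki 0 = Finset.univ)
    (hacc : ∀ k : K, 3 ≤ (Finset.univ.filter (fun i : Fin (m + 1) => k ∈ Ki i)).card)
    (B : Fin (m + 1) → Matrix K K ℝ) (hB : ∀ i, i ≠ 0 → SPDOn (Ki i) (B i))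
    (Xinf : Fin (m + 1) → Matrix K K ℝ)
    (hXspd : ∀ i, SPDOn (Ki i) (Xinf i))
    (hfix : ∀ i, i ≠ 0 → Xinf i = Fmap Ki B Xinf i)
    (hfix0 : Xinf 0 = invOn (Ki 0)
      (proj K (Ki 0) * (∑ j ∈ Finset.univ.erase 0, Xinf j)⁻¹ * proj K (Ki 0))) :
    Xinf 0 = ∑ j ∈ Finset.univ.erase 0, Xinf j ∧
    ∀ i, i ≠ 0 →
      invOn (Ki i) (Xinf i) = invOn (Ki i) (B i) +
        proj K (Ki i) *
          ((2 : ℝ) • (∑ j ∈ Finset.univ.erase 0, Xinf j) - Xinf i)⁻¹ *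
          proj K (Ki i) := by
  exact stmt_14' m hm Ki hK0 hacc B hB Xinf hXspd hfix hfix0
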